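/- Let 1 ≤ d₁ ≤ d₂ ≤ … ≤ dₙ be a sequence of integers. If there exists an index i ∈ {1,…,n} such that dᵢ = Σ_{j=1}^{i−1} kⱼ·dⱼ for some natural numbers k₁,…,k_{i−1}, then there exists a tame automorphism F of ℂⁿ with multidegree mdeg F = (d₁,…,dₙ). -/

import Mathlib

open MvPolynomial

/-- The multidegree of a polynomial automorphism of `ℂⁿ`: the sequence of total degrees of the
images of the variables. -/
noncomputable def polyMdeg {n : ℕ} (F : MvPolynomial (Fin n) ℂ ≃ₐ[ℂ] MvPolynomial (Fin n) ℂ) :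
    Fin n → ℕ := fun i => (F (X i)).totalDegree

/-- An automorphism is affine (linear) if it maps each variable to a polynomial of degree ≤ 1. -/
def IsAffineAut {n : ℕ} (F : MvPolynomial (Fin n) ℂ ≃ₐ[ℂ] MvPolynomial (Fin n) ℂ) : Prop :=
  ∀ i, (F (X i)).totalDegree ≤ 1

/-- An automorphism is elementary (triangular) if it sends one variable `xᵢ` to `xᵢ + p`, where
`p` is a polynomial in the other variables, and fixes all other variables. -/
def IsElementaryAut {n : ℕ} (F : MvPolynomial (Fin n) ℂ ≃ₐ[ℂ] MvPolynomial (Fin n) ℂ) : Prop :=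
  ∃ (i : Fin n) (p : MvPolynomial (Fin n) ℂ), degreeOf i p = 0 ∧
    F (X i) = X i + p ∧ ∀ j, j ≠ i → F (X j) = X j

/-- A tame automorphism is a composition of affine and elementary automorphisms, i.e. an element
of the subgroup generated by these. -/
def IsTameAut {n : ℕ} (F : MvPolynomial (Fin n) ℂ ≃ₐ[ℂ] MvPolynomial (Fin n) ℂ) : Prop :=
  F ∈ Subgroup.closure {G : MvPolynomial (Fin n) ℂ ≃ₐ[ℂ] MvPolynomial (Fin n) ℂ |
    IsAffineAut G ∨ IsElementaryAut G}

variable {n : ℕ}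

noncomputable def mkAut (f g : Fin n → MvPolynomial (Fin n) ℂ)
    (h1 : ∀ j, aeval g (f j) = X j) (h2 : ∀ j, aeval f (g j) = X j) :
    MvPolynomial (Fin n) ℂ ≃ₐ[ℂ] MvPolynomial (Fin n) ℂ :=
  AlgEquiv.ofAlgHom (aeval f) (aeval g)
    (MvPolynomial.algHom_ext fun j => by simpa using h2 j)
    (MvPolynomial.algHom_ext fun j => by simpa using h1 j)

lemma mkAut_apply_X (f g : Fin n → MvPolynomial (Fin n) ℂ) (h1 h2) (j : Fin n) :
    mkAut f g h1 h2 (X j) = f j := by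
  have h : mkAut f g h1 h2 (X j) = (aeval f) (X j) := rfl
  rw [h, aeval_X]

lemma mkAut_symm_apply (f g : Fin n → MvPolynomial (Fin n) ℂ) (h1 h2)
    (p : MvPolynomial (Fin n) ℂ) : (mkAut f g h1 h2).symm p = aeval g p := rfl

noncomputable def phi : MvPolynomial (Fin n) ℂ →ₐ[ℂ] Polynomial ℂ :=
  aeval (fun _ => Polynomial.X)

lemma natDegree_phi_le (p : MvPolynomial (Fin n) ℂ) :
    (phi p).natDegree ≤ p.totalDegree := by
  conv_lhs => rw [p.as_sum]
  rw [map_sum]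
  apply Polynomial.natDegree_sum_le_of_forall_le
  intro m hm
  rw [phi, aeval_monomial]
  have hprod : (m.prod fun (_ : Fin n) e => (Polynomial.X : Polynomial ℂ) ^ e)
      = Polynomial.X ^ (m.sum fun _ e => e) := by
    rw [Finsupp.prod, Finsupp.sum, Finset.prod_pow_eq_pow_sum]
  rw [hprod]
  refine Polynomial.natDegree_mul_le.trans ?_
  simpa using MvPolynomial.le_totalDegree hm

lemma polyA_coeff (q : ℕ) (hq : 1 ≤ q) :
    ((Polynomial.X : Polynomial ℂ) + Polynomial.X ^ q).coeff q ≠ 0 := by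
  rw [Polynomial.coeff_add, Polynomial.coeff_X, Polynomial.coeff_X_pow]
  by_cases h : q = 1
  · simp [h]
  · rw [if_neg (fun hh => h hh.symm)]; norm_num

lemma polyA_ne (q : ℕ) (hq : 1 ≤ q) :
    ((Polynomial.X : Polynomial ℂ) + Polynomial.X ^ q) ≠ 0 := fun h => by
  have := polyA_coeff q hq
  rw [h] at this; simp at this

lemma polyA_natDegree (q : ℕ) (hq : 1 ≤ q) :
    ((Polynomial.X : Polynomial ℂ) + Polynomial.X ^ q).natDegree = q := by
  apply le_antisymm
  · refine (Polynomial.natDegree_add_le _ _).trans ?_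
    simp [Polynomial.natDegree_X_pow, hq]
  · exact Polynomial.le_natDegree_of_ne_zero (polyA_coeff q hq)

lemma phi_X_add_pow (j b : Fin n) (q : ℕ) :
    phi (X j + X b ^ q : MvPolynomial (Fin n) ℂ)
      = (Polynomial.X : Polynomial ℂ) + Polynomial.X ^ q := by
  rw [map_add, map_pow]
  have hX : ∀ m : Fin n, phi (X m : MvPolynomial (Fin n) ℂ) = Polynomial.X := by
    intro m
    have : phi (X m : MvPolynomial (Fin n) ℂ)
        = (aeval (fun _ : Fin n => (Polynomial.X : Polynomial ℂ))) (X m) := rfl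
    rw [this, aeval_X]
  rw [hX j, hX b]

lemma tdXaddpow (j b : Fin n) (q : ℕ) (hq : 1 ≤ q) :
    (X j + X b ^ q : MvPolynomial (Fin n) ℂ).totalDegree = q := by
  apply le_antisymm
  · refine (totalDegree_add _ _).trans ?_
    simp [totalDegree_X, totalDegree_X_pow, hq]
  · have h1 := natDegree_phi_le (X j + X b ^ q : MvPolynomial (Fin n) ℂ)
    rw [phi_X_add_pow, polyA_natDegree q hq] at h1
    exact h1

lemma bigdeg (i : Fin n) (d k : Fin n → ℕ) (hd : ∀ j, 1 ≤ d j)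
    (hD : 2 ≤ ∑ j ∈ Finset.Iio i, k j * d j) :
    (X i + ∏ j ∈ Finset.Iio i, (X j + X i ^ d j) ^ k j
      : MvPolynomial (Fin n) ℂ).totalDegree = ∑ j ∈ Finset.Iio i, k j * d j := by
  set D := ∑ j ∈ Finset.Iio i, k j * d j with hDdef
  set P : MvPolynomial (Fin n) ℂ := ∏ j ∈ Finset.Iio i, (X j + X i ^ d j) ^ k j with hP
  have hPle : P.totalDegree ≤ D := by
    refine (totalDegree_finset_prod _ _).trans ?_
    refine Finset.sum_le_sum fun j _ => ?_
    refine (totalDegree_pow _ _).trans ?_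
    rw [tdXaddpow j i (d j) (hd j)]
  apply le_antisymm
  · refine (totalDegree_add _ _).trans ?_
    rw [totalDegree_X]
    exact max_le (by omega) hPle
  · -- lower bound via phi
    have hphiP : phi P = ∏ j ∈ Finset.Iio i,
        ((Polynomial.X : Polynomial ℂ) + Polynomial.X ^ d j) ^ k j := by
      rw [hP, map_prod]
      refine Finset.prod_congr rfl fun j _ => ?_
      rw [map_pow, phi_X_add_pow]
    have hQdeg : (∏ j ∈ Finset.Iio i,
        ((Polynomial.X : Polynomial ℂ) + Polynomial.X ^ d j) ^ k j).natDegree = D := by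
      rw [Polynomial.natDegree_prod _ _
        (fun j _ => pow_ne_zero _ (polyA_ne (d j) (hd j)))]
      exact Finset.sum_congr rfl fun j _ => by
        rw [Polynomial.natDegree_pow, polyA_natDegree (d j) (hd j)]
    have hQne : (∏ j ∈ Finset.Iio i,
        ((Polynomial.X : Polynomial ℂ) + Polynomial.X ^ d j) ^ k j) ≠ 0 :=
      Finset.prod_ne_zero_iff.mpr fun j _ => pow_ne_zero _ (polyA_ne (d j) (hd j))
    have h1 := natDegree_phi_le (X i + P : MvPolynomial (Fin n) ℂ)
    have hphiX : phi (X i : MvPolynomial (Fin n) ℂ) = Polynomial.X := by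
      have : phi (X i : MvPolynomial (Fin n) ℂ)
          = (aeval (fun _ : Fin n => (Polynomial.X : Polynomial ℂ))) (X i) := rfl
      rw [this, aeval_X]
    rw [map_add, hphiX, hphiP] at h1
    refine le_trans ?_ h1
    apply Polynomial.le_natDegree_of_ne_zero
    rw [Polynomial.coeff_add, Polynomial.coeff_X, if_neg (by omega), zero_add,
      ← hQdeg, Polynomial.coeff_natDegree]
    exact Polynomial.leadingCoeff_ne_zero.mpr hQne

noncomputable def elemAut (a : Fin n) (p : MvPolynomial (Fin n) ℂ)
    (hf : aeval (fun j => if j = a then X a + p else X j) p = p)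
    (hg : aeval (fun j => if j = a then X a - p else X j) p = p) :
    MvPolynomial (Fin n) ℂ ≃ₐ[ℂ] MvPolynomial (Fin n) ℂ :=
  mkAut (fun j => if j = a then X a + p else X j)
    (fun j => if j = a then X a - p else X j)
    (fun j => by
      beta_reduce
      by_cases h : j = a
      · subst h
        rw [if_pos rfl, map_add, aeval_X, if_pos rfl, hg]
        ring
      · rw [if_neg h, aeval_X, if_neg h])
    (fun j => by
      beta_reduce
      by_cases h : j = a
      · subst h
        rw [if_pos rfl, map_sub, aeval_X, if_pos rfl, hf]
        ring
      · rw [if_neg h, aeval_X, if_neg h])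

lemma elemAut_apply_X (a : Fin n) (p : MvPolynomial (Fin n) ℂ) (hf hg) (j : Fin n) :
    elemAut a p hf hg (X j) = if j = a then X a + p else X j :=
  mkAut_apply_X _ _ _ _ j

lemma elemAut_mem (a : Fin n) (p : MvPolynomial (Fin n) ℂ) (hf hg)
    (hdeg : degreeOf a p = 0) : IsTameAut (elemAut a p hf hg) := by
  apply Subgroup.subset_closure
  right
  refine ⟨a, p, hdeg, ?_, ?_⟩
  · rw [elemAut_apply_X, if_pos rfl]
  · intro j hj
    rw [elemAut_apply_X, if_neg hj]

lemma degreeOf_X_pow_eq_zero (a b : Fin n) (hba : b ≠ a) (q : ℕ) :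
    degreeOf a ((X b : MvPolynomial (Fin n) ℂ) ^ q) = 0 := by
  refine Nat.le_zero.mp ?_
  refine (degreeOf_pow_le a _ q).trans ?_
  rw [degreeOf_X, if_neg (fun h : a = b => hba h.symm)]
  simp

lemma tame_of_parallel (b : Fin n) (q : Fin n → ℕ) (S : Finset (Fin n)) (hb : b ∉ S)
    (F : MvPolynomial (Fin n) ℂ ≃ₐ[ℂ] MvPolynomial (Fin n) ℂ)
    (hF : ∀ j ∈ S, F (X j) = X j + X b ^ q j)
    (hF' : ∀ j ∉ S, F (X j) = X j) : IsTameAut F := by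
  induction S using Finset.induction_on generalizing F with
  | empty =>
    have hhom : (F : MvPolynomial (Fin n) ℂ →ₐ[ℂ] MvPolynomial (Fin n) ℂ)
        = AlgHom.id ℂ _ := MvPolynomial.algHom_ext fun j => by
      simpa using hF' j (Finset.notMem_empty j)
    have hF1 : F = 1 := by
      apply AlgEquiv.ext; intro x
      have := DFunLike.congr_fun hhom x
      simpa using this
    rw [hF1]; exact one_mem _
  | @insert a S' ha ih =>
    have hba : b ≠ a := fun h => hb (h ▸ Finset.mem_insert_self a S')
    have hbS : b ∉ S' := fun h => hb (Finset.mem_insert_of_mem h)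
    have hfix : ∀ (c : MvPolynomial (Fin n) ℂ),
        aeval (fun j => if j = a then X a + c else X j) ((X b : MvPolynomial (Fin n) ℂ) ^ q a)
          = X b ^ q a := by
      intro c; rw [map_pow, aeval_X, if_neg hba]
    have hfix' : ∀ (c : MvPolynomial (Fin n) ℂ),
        aeval (fun j => if j = a then X a - c else X j) ((X b : MvPolynomial (Fin n) ℂ) ^ q a)
          = X b ^ q a := by
      intro c; rw [map_pow, aeval_X, if_neg hba]
    set E := elemAut a (X b ^ q a) (hfix _) (hfix' _) with hE
    have hEsymm : ∀ (x : MvPolynomial (Fin n) ℂ), E.symm x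
        = aeval (fun j => if j = a then X a - X b ^ q a else X j) x := fun x => rfl
    have key : ∀ j, (E⁻¹ * F) (X j) = if j ∈ S' then X j + X b ^ q j else X j := by
      intro j
      rw [AlgEquiv.mul_apply]
      by_cases hj : j ∈ S'
      · rw [if_pos hj, hF j (Finset.mem_insert_of_mem hj)]
        show E.symm _ = _
        rw [hEsymm, map_add, aeval_X, map_pow, aeval_X,
          if_neg (fun h : j = a => ha (h ▸ hj)), if_neg hba]
      · rw [if_neg hj]
        by_cases hja : j = a
        · subst hja
          rw [hF j (Finset.mem_insert_self j S')]
          show E.symm _ = _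
          rw [hEsymm, map_add, aeval_X, map_pow, aeval_X, if_pos rfl, if_neg hba]
          ring
        · rw [hF' j (fun h => by
            rcases Finset.mem_insert.mp h with h | h
            · exact hja h
            · exact hj h)]
          show E.symm _ = _
          rw [hEsymm, aeval_X, if_neg hja]
    have hIH : IsTameAut (E⁻¹ * F) := by
      apply ih hbS
      · intro j hj; rw [key j, if_pos hj]
      · intro j hj; rw [key j, if_neg hj]
    have hEmem : IsTameAut E :=
      elemAut_mem a _ _ _ (degreeOf_X_pow_eq_zero a b hba (q a))
    have : F = E * (E⁻¹ * F) := by group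
    rw [this]
    exact mul_mem hEmem hIH


/-- If `1 ≤ d₁ ≤ … ≤ dₙ` and some `dᵢ` is a natural combination `∑_{j<i} kⱼ dⱼ` of the previous
terms, then `(d₁, …, dₙ)` is the multidegree of some tame automorphism of `ℂⁿ`. -/
theorem exists_tame_of_sum_prev (n : ℕ) (d : Fin n → ℕ) (hpos : ∀ i, 1 ≤ d i)
    (hmono : Monotone d) (i : Fin n) (k : Fin n → ℕ)
    (hi : d i = ∑ j ∈ Finset.Iio i, k j * d j) :
    ∃ F : MvPolynomial (Fin n) ℂ ≃ₐ[ℂ] MvPolynomial (Fin n) ℂ,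
      IsTameAut F ∧ polyMdeg F = d := by
  have hn : 0 < n := i.pos
  by_cases h0 : d ⟨0, hn⟩ = 1
  · -- Case A : base variable z = 0 has degree 1
    set z : Fin n := ⟨0, hn⟩ with hzdef
    set c : Fin n → MvPolynomial (Fin n) ℂ
      := fun j => if j = z then 0 else X z ^ d j with hc
    have hcz : c z = 0 := by rw [hc]; simp
    have h1 : ∀ j, aeval (fun m => X m - c m) (X j + c j) = X j := by
      intro j
      rw [map_add, aeval_X]
      by_cases hj : j = z
      · subst hj; rw [hcz]; simp
      · rw [hc]; simp only [if_neg hj, map_pow, aeval_X, if_pos rfl]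
        ring_nf
        simp
    have h2 : ∀ j, aeval (fun m => X m + c m) (X j - c j) = X j := by
      intro j
      rw [map_sub, aeval_X]
      by_cases hj : j = z
      · subst hj; rw [hcz]; simp
      · rw [hc]; simp only [if_neg hj, map_pow, aeval_X, if_pos rfl]
        ring_nf
        simp
    refine ⟨mkAut (fun j => X j + c j) (fun j => X j - c j) h1 h2, ?_, ?_⟩
    · apply tame_of_parallel z d (Finset.univ.erase z) (Finset.notMem_erase z _)
      · intro j hj
        rw [mkAut_apply_X, hc]
        simp only [if_neg (Finset.ne_of_mem_erase hj)]
      · intro j hj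
        have hjz : j = z := by
          by_contra hne
          exact hj (Finset.mem_erase.mpr ⟨hne, Finset.mem_univ j⟩)
        subst hjz
        rw [mkAut_apply_X, hcz, add_zero]
    · funext j
      show ((mkAut _ _ h1 h2) (X j)).totalDegree = d j
      rw [mkAut_apply_X]
      by_cases hj : j = z
      · subst hj; rw [hcz, add_zero, totalDegree_X, h0]
      · rw [hc]; simp only [if_neg hj]
        exact tdXaddpow j z (d j) (hpos j)
  · -- Case B : all degrees ≥ 2, base variable i
    have hz2 : 2 ≤ d ⟨0, hn⟩ := by
      have := hpos ⟨0, hn⟩; omega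
    have hdi2 : 2 ≤ d i := le_trans hz2 (hmono (by exact Fin.mk_le_of_le_val (Nat.zero_le _)))
    set c : Fin n → MvPolynomial (Fin n) ℂ
      := fun j => if j = i then 0 else X i ^ d j with hc
    have hci : c i = 0 := by rw [hc]; simp
    have h1 : ∀ j, aeval (fun m => X m - c m) (X j + c j) = X j := by
      intro j
      rw [map_add, aeval_X]
      by_cases hj : j = i
      · subst hj; rw [hci]; simp
      · rw [hc]; simp only [if_neg hj, map_pow, aeval_X, if_pos rfl]
        ring_nf
        simp
    have h2 : ∀ j, aeval (fun m => X m + c m) (X j - c j) = X j := by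
      intro j
      rw [map_sub, aeval_X]
      by_cases hj : j = i
      · subst hj; rw [hci]; simp
      · rw [hc]; simp only [if_neg hj, map_pow, aeval_X, if_pos rfl]
        ring_nf
        simp
    set G := mkAut (fun j => X j + c j) (fun j => X j - c j) h1 h2 with hG
    set p0 : MvPolynomial (Fin n) ℂ := ∏ j ∈ Finset.Iio i, (X j) ^ k j with hp0
    have hfix : ∀ (w : MvPolynomial (Fin n) ℂ),
        aeval (fun j => if j = i then w else X j) p0 = p0 := by
      intro w
      rw [hp0, map_prod]
      refine Finset.prod_congr rfl fun j hj => ?_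
      rw [map_pow, aeval_X, if_neg (ne_of_lt (Finset.mem_Iio.mp hj))]
    set E := elemAut i p0 (hfix _) (hfix _) with hE
    have hdeg0 : degreeOf i p0 = 0 := by
      refine Nat.le_zero.mp ?_
      refine (degreeOf_prod_le _ _ _).trans (le_of_eq ?_)
      exact Finset.sum_eq_zero fun j hj =>
        degreeOf_X_pow_eq_zero i j (ne_of_lt (Finset.mem_Iio.mp hj)) (k j)
    refine ⟨G * E, ?_, ?_⟩
    · refine mul_mem ?_ (elemAut_mem i p0 _ _ hdeg0)
      apply tame_of_parallel i d (Finset.univ.erase i) (Finset.notMem_erase i _)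
      · intro j hj
        rw [hG, mkAut_apply_X, hc]
        simp only [if_neg (Finset.ne_of_mem_erase hj)]
      · intro j hj
        have hji : j = i := by
          by_contra hne
          exact hj (Finset.mem_erase.mpr ⟨hne, Finset.mem_univ j⟩)
        subst hji
        rw [hG, mkAut_apply_X, hci, add_zero]
    · funext j
      show ((G * E) (X j)).totalDegree = d j
      rw [AlgEquiv.mul_apply]
      by_cases hj : j = i
      · subst hj
        rw [hE, elemAut_apply_X, if_pos rfl, map_add]
        have hGXj : G (X j) = X j + c j := mkAut_apply_X _ _ _ _ j
        rw [hGXj, hci, add_zero]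
        have hGp0 : G p0 = ∏ m ∈ Finset.Iio j, (X m + X j ^ d m) ^ k m := by
          rw [hp0, map_prod]
          refine Finset.prod_congr rfl fun m hm => ?_
          rw [map_pow]
          have : G (X m) = X m + c m := mkAut_apply_X _ _ _ _ m
          rw [this, hc]
          simp only [if_neg (ne_of_lt (Finset.mem_Iio.mp hm))]
        rw [hGp0]
        rw [bigdeg j d k hpos (by rw [← hi]; exact hdi2)]
        exact hi.symm
      · rw [hE, elemAut_apply_X, if_neg hj]
        have hGXj : G (X j) = X j + c j := mkAut_apply_X _ _ _ _ j
        rw [hGXj, hc]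
        simp only [if_neg hj]
        exact tdXaddpow j i (d j) (hpos j)
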